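/- In a network polymatrix game, for any measurable trajectory x : [0,∞) → Δ, any t > 0, and the time-averaged strategy μ(t) = (1/t)∫_0^t x(s) ds, the total regret R(t) = Σ_k R_k(t) satisfies (1/t) R(t) ≥ SW(μ(t)) − (1/t) ∫_0^t SW(x(s)) ds; equivalently, (1/t) ∫_0^t SW(x(s)) ds ≥ SW(μ(t)) − (1/t) R(t). -/

import Mathlib

/-
STATEMENT 7: In a network polymatrix game, for any measurable trajectory
x : [0,∞) → Δ, any t > 0, and the time-averaged strategy μ(t) = (1/t)∫_0^t x(s) ds,
the total regret R(t) = Σ_k R_k(t) satisfies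
(1/t) R(t) ≥ SW(μ(t)) − (1/t)∫_0^t SW(x(s)) ds; equivalently,
(1/t)∫_0^t SW(x(s)) ds ≥ SW(μ(t)) − (1/t) R(t).
-/

open Filter Topology

noncomputable section

/-- Joint strategy space. -/
abbrev Strat {N : ℕ} (n : Fin N → ℕ) := ∀ k, Fin (n k) → ℝ

/-- `x` lies in `Δ = Δ₁ × ⋯ × Δ_N`. -/
def JointSimplex {N : ℕ} {n : Fin N → ℕ} (x : Strat n) : Prop :=
  ∀ k, x k ∈ stdSimplex ℝ (Fin (n k))

/-- Reward vector of player `k`: `r_k(x) = Σ_{(k,l)∈E} A^{kl} x_l`. -/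
def polyReward {N : ℕ} {n : Fin N → ℕ} (E : Finset (Fin N × Fin N))
    (A : ∀ k l, Matrix (Fin (n k)) (Fin (n l)) ℝ) : Strat n → Strat n :=
  fun x k i => ∑ l ∈ Finset.univ.filter (fun l => (k, l) ∈ E), ∑ j, A k l i j * x l j

/-- Payoff of player `k`: `u_k(x) = Σ_{(k,l)∈E} ⟨x_k, A^{kl} x_l⟩`. -/
def polyPayoff {N : ℕ} {n : Fin N → ℕ} (E : Finset (Fin N × Fin N))
    (A : ∀ k l, Matrix (Fin (n k)) (Fin (n l)) ℝ) (k : Fin N) (x : Strat n) : ℝ :=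
  ∑ i, x k i * polyReward E A x k i

/-- Social Welfare `SW(x) = Σ_k u_k(x)`. -/
def SW {N : ℕ} {n : Fin N → ℕ} (E : Finset (Fin N × Fin N))
    (A : ∀ k l, Matrix (Fin (n k)) (Fin (n l)) ℝ) (x : Strat n) : ℝ :=
  ∑ k, polyPayoff E A k x

/-- Regret of player `k` at time `t` along the trajectory `x`. -/
def regret {N : ℕ} {n : Fin N → ℕ} (E : Finset (Fin N × Fin N))
    (A : ∀ k l, Matrix (Fin (n k)) (Fin (n l)) ℝ) (x : ℝ → Strat n) (k : Fin N)
    (t : ℝ) : ℝ :=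
  sSup ((fun xk' => ∫ s in (0:ℝ)..t,
      (polyPayoff E A k (Function.update (x s) k xk') - polyPayoff E A k (x s))) ''
    stdSimplex ℝ (Fin (n k)))

/-- Time-averaged strategy `μ(t) = (1/t) ∫_0^t x(s) ds`. -/
def timeAvg {N : ℕ} {n : Fin N → ℕ} (x : ℝ → Strat n) (t : ℝ) : Strat n :=
  fun k i => (1 / t) * ∫ s in (0:ℝ)..t, x s k i

open MeasureTheory in
lemma intervalIntegrable_of_bdd {f : ℝ → ℝ} {t C : ℝ} (hf : Measurable f)
    (hC : ∀ s ∈ Set.uIoc 0 t, |f s| ≤ C) :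
    IntervalIntegrable f volume 0 t := by
  rw [intervalIntegrable_iff]
  refine Integrable.mono' (g := fun _ => C)
    ((integrableOn_const_iff (C := C)).2 (Or.inr ?_)) hf.aestronglyMeasurable.restrict ?_
  · rw [Set.uIoc]; exact measure_Ioc_lt_top
  · exact (ae_restrict_iff' measurableSet_uIoc).2 (ae_of_all _ fun s hs => by
      simpa [Real.norm_eq_abs] using hC s hs)

lemma stdSimplex_le_one' {m : ℕ} {y : Fin m → ℝ} (hy : y ∈ stdSimplex ℝ (Fin m)) (i : Fin m) :
    y i ≤ 1 := by
  rcases hy with ⟨h0, h1⟩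
  calc y i ≤ ∑ j, y j := Finset.single_le_sum (fun j _ => h0 j) (Finset.mem_univ i)
    _ = 1 := h1

lemma abs_polyPayoff_le {N : ℕ} {n : Fin N → ℕ} (E : Finset (Fin N × Fin N))
    (A : ∀ k l, Matrix (Fin (n k)) (Fin (n l)) ℝ) (k : Fin N) {z : Strat n}
    (hz : JointSimplex z) :
    |polyPayoff E A k z| ≤ ∑ i, ∑ l, ∑ j, |A k l i j| := by
  have habs : ∀ l j, |z l j| ≤ 1 := fun l j =>
    abs_le.2 ⟨by linarith [(hz l).1 j], stdSimplex_le_one' (hz l) j⟩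
  unfold polyPayoff polyReward
  refine le_trans (Finset.abs_sum_le_sum_abs _ _) (Finset.sum_le_sum fun i _ => ?_)
  rw [abs_mul]
  have h1 : |∑ l ∈ Finset.univ.filter (fun l => (k, l) ∈ E), ∑ j, A k l i j * z l j|
      ≤ ∑ l, ∑ j, |A k l i j| := by
    refine le_trans (Finset.abs_sum_le_sum_abs _ _) ?_
    refine le_trans (Finset.sum_le_sum_of_subset_of_nonneg (Finset.filter_subset _ _)
      (fun l _ _ => abs_nonneg _)) ?_
    refine Finset.sum_le_sum fun l _ => ?_
    refine le_trans (Finset.abs_sum_le_sum_abs _ _) (Finset.sum_le_sum fun j _ => ?_)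
    rw [abs_mul]
    calc |A k l i j| * |z l j| ≤ |A k l i j| * 1 :=
          mul_le_mul_of_nonneg_left (habs l j) (abs_nonneg _)
      _ = |A k l i j| := mul_one _
  calc |z k i| * |∑ l ∈ Finset.univ.filter (fun l => (k, l) ∈ E), ∑ j, A k l i j * z l j|
      ≤ 1 * (∑ l, ∑ j, |A k l i j|) :=
        mul_le_mul (habs k i) h1 (abs_nonneg _) zero_le_one
    _ = ∑ l, ∑ j, |A k l i j| := one_mul _



lemma intervalIntegrable_finset_sum {ι : Type*} (s : Finset ι) {f : ι → ℝ → ℝ}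
    {μ : MeasureTheory.Measure ℝ} {a b : ℝ}
    (h : ∀ i ∈ s, IntervalIntegrable (f i) μ a b) :
    IntervalIntegrable (fun x => ∑ i ∈ s, f i x) μ a b := by
  have heq : (fun x => ∑ i ∈ s, f i x) = ∑ i ∈ s, f i := by funext x; simp
  rw [heq]; exact IntervalIntegrable.sum s h

set_option maxHeartbeats 1000000 in
theorem regret_bounds_welfare_of_time_average
    {N : ℕ} {n : Fin N → ℕ}
    (E : Finset (Fin N × Fin N))
    (A : ∀ k l, Matrix (Fin (n k)) (Fin (n l)) ℝ)
    (x : ℝ → Strat n) (hxmeas : ∀ k i, Measurable fun s => x s k i)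
    (hxΔ : ∀ s : ℝ, 0 ≤ s → JointSimplex (x s))
    (t : ℝ) (ht : 0 < t) :
    SW E A (timeAvg x t) - (1 / t) * ∫ s in (0:ℝ)..t, SW E A (x s)
        ≤ (1 / t) * ∑ k, regret E A x k t ∧
      SW E A (timeAvg x t) - (1 / t) * ∑ k, regret E A x k t
        ≤ (1 / t) * ∫ s in (0:ℝ)..t, SW E A (x s) := by
  classical
  have ht' : t ≠ 0 := ht.ne'
  set μ : Strat n := timeAvg x t with hμdef
  set B : Fin N → ℝ := fun k => ∑ i, ∑ l, ∑ j, |A k l i j| with hBdef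
  have hxmem : ∀ s ∈ Set.uIoc 0 t, JointSimplex (x s) := by
    intro s hs
    rw [Set.uIoc_of_le ht.le] at hs
    exact hxΔ s hs.1.le
  have hxInt : ∀ l j, IntervalIntegrable (fun s => x s l j) MeasureTheory.volume 0 t := by
    intro l j
    refine intervalIntegrable_of_bdd (hxmeas l j) (C := 1) fun s hs => ?_
    exact abs_le.2 ⟨by linarith [(hxmem s hs l).1 j], stdSimplex_le_one' (hxmem s hs l) j⟩
  -- μ lies in the joint simplex
  have hμΔ : JointSimplex μ := by
    intro k
    constructor
    · intro i
      have h0 : 0 ≤ ∫ s in (0:ℝ)..t, x s k i :=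
        intervalIntegral.integral_nonneg ht.le fun s hs => (hxΔ s hs.1 k).1 i
      have : (0:ℝ) < 1 / t := by positivity
      exact mul_nonneg this.le h0
    · have hsum : ∑ i, ∫ s in (0:ℝ)..t, x s k i = t := by
        rw [← intervalIntegral.integral_finset_sum (fun i _ => hxInt k i)]
        rw [intervalIntegral.integral_congr (g := fun _ => (1:ℝ))
          (fun s hs => by
            rw [Set.uIcc_of_le ht.le] at hs
            exact (hxΔ s hs.1 k).2)]
        simp
      show ∑ i, (1 / t) * ∫ s in (0:ℝ)..t, x s k i = 1
      rw [← Finset.mul_sum, hsum]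
      field_simp
  have hupdΔ : ∀ (s : ℝ), s ∈ Set.uIoc 0 t → ∀ k (y : Fin (n k) → ℝ),
      y ∈ stdSimplex ℝ (Fin (n k)) → JointSimplex (Function.update (x s) k y) := by
    intro s hs k y hy l
    rcases eq_or_ne l k with h | h
    · subst h; rw [Function.update_self]; exact hy
    · rw [Function.update_of_ne h]; exact hxmem s hs l
  -- measurability and integrability of payoffs
  have hmeasPay : ∀ k, Measurable fun s => polyPayoff E A k (x s) := by
    intro k
    unfold polyPayoff polyReward
    exact Finset.measurable_sum _ fun i _ => (hxmeas k i).mul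
      (Finset.measurable_sum _ fun l _ => Finset.measurable_sum _ fun j _ =>
        (hxmeas l j).const_mul _)
  have hIntPay : ∀ k, IntervalIntegrable (fun s => polyPayoff E A k (x s))
      MeasureTheory.volume 0 t := fun k =>
    intervalIntegrable_of_bdd (hmeasPay k) (C := B k) fun s hs =>
      abs_polyPayoff_le E A k (hxmem s hs)
  -- key lower bound on each player's regret
  have hkey : ∀ k, t * polyPayoff E A k μ - (∫ s in (0:ℝ)..t, polyPayoff E A k (x s))
      ≤ regret E A x k t := by
    intro k
    have hbdd : BddAbove ((fun xk' => ∫ s in (0:ℝ)..t,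
        (polyPayoff E A k (Function.update (x s) k xk') - polyPayoff E A k (x s))) ''
        stdSimplex ℝ (Fin (n k))) := by
      refine ⟨2 * B k * t, ?_⟩
      rintro v ⟨y, hy, rfl⟩
      have hb : ∀ s ∈ Set.uIoc 0 t,
          ‖polyPayoff E A k (Function.update (x s) k y) - polyPayoff E A k (x s)‖ ≤ 2 * B k := by
        intro s hs
        have h1 := abs_polyPayoff_le E A k (hupdΔ s hs k y hy)
        have h2 := abs_polyPayoff_le E A k (hxmem s hs)
        rw [Real.norm_eq_abs]
        calc |polyPayoff E A k (Function.update (x s) k y) - polyPayoff E A k (x s)|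
            ≤ |polyPayoff E A k (Function.update (x s) k y)| + |polyPayoff E A k (x s)| :=
              abs_sub _ _
          _ ≤ 2 * B k := by rw [hBdef]; linarith
      have hnorm := intervalIntegral.norm_integral_le_of_norm_le_const hb
      rw [Real.norm_eq_abs] at hnorm
      refine le_trans (le_abs_self _) (le_trans hnorm ?_)
      rw [sub_zero, abs_of_pos ht]
    -- integrability of the update payoff
    have hwInt : ∀ (l : Fin N) (j : Fin (n l)),
        IntervalIntegrable (fun s => Function.update (x s) k (μ k) l j)
          MeasureTheory.volume 0 t := by
      intro l j
      rcases eq_or_ne l k with h | h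
      · subst h
        simp only [Function.update_self]
        exact intervalIntegrable_const
      · simp only [Function.update_of_ne h]
        exact hxInt l j
    have hwVal : ∀ (l : Fin N) (j : Fin (n l)),
        (∫ s in (0:ℝ)..t, Function.update (x s) k (μ k) l j) = t * μ l j := by
      intro l j
      rcases eq_or_ne l k with h | h
      · subst h
        simp only [Function.update_self]
        rw [intervalIntegral.integral_const, smul_eq_mul, sub_zero]
      · simp only [Function.update_of_ne h]
        show (∫ s in (0:ℝ)..t, x s l j) = t * ((1 / t) * ∫ s in (0:ℝ)..t, x s l j)
        field_simp
    have hinnerInt : ∀ i : Fin (n k), IntervalIntegrable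
        (fun s => ∑ l ∈ Finset.univ.filter (fun l => (k, l) ∈ E), ∑ j,
          A k l i j * Function.update (x s) k (μ k) l j) MeasureTheory.volume 0 t := by
      intro i
      exact intervalIntegrable_finset_sum _ fun l _ =>
        intervalIntegrable_finset_sum _ fun j _ => (hwInt l j).const_mul _
    have hg : ∀ s, polyPayoff E A k (Function.update (x s) k (μ k)) =
        ∑ i, μ k i * ∑ l ∈ Finset.univ.filter (fun l => (k, l) ∈ E), ∑ j,
          A k l i j * Function.update (x s) k (μ k) l j := by
      intro s
      unfold polyPayoff polyReward
      simp [Function.update_self]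
    have hgInt : IntervalIntegrable
        (fun s => polyPayoff E A k (Function.update (x s) k (μ k)))
        MeasureTheory.volume 0 t := by
      simp only [hg]
      exact intervalIntegrable_finset_sum _ fun i _ => (hinnerInt i).const_mul _
    have hval : (∫ s in (0:ℝ)..t, polyPayoff E A k (Function.update (x s) k (μ k)))
        = t * polyPayoff E A k μ := by
      simp only [hg]
      rw [intervalIntegral.integral_finset_sum (fun i _ => (hinnerInt i).const_mul _)]
      have hstep : ∀ i : Fin (n k),
          (∫ s in (0:ℝ)..t, μ k i * ∑ l ∈ Finset.univ.filter (fun l => (k, l) ∈ E), ∑ j,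
            A k l i j * Function.update (x s) k (μ k) l j)
          = μ k i * ∑ l ∈ Finset.univ.filter (fun l => (k, l) ∈ E), ∑ j,
            A k l i j * (t * μ l j) := by
        intro i
        rw [intervalIntegral.integral_const_mul]
        congr 1
        rw [intervalIntegral.integral_finset_sum
          (fun l _ => intervalIntegrable_finset_sum _ (fun j _ => (hwInt l j).const_mul _))]
        refine Finset.sum_congr rfl fun l _ => ?_
        rw [intervalIntegral.integral_finset_sum (fun j _ => (hwInt l j).const_mul _)]
        refine Finset.sum_congr rfl fun j _ => ?_
        rw [intervalIntegral.integral_const_mul, hwVal]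
      simp only [hstep]
      have hpull : ∀ i : Fin (n k),
          (∑ l ∈ Finset.univ.filter (fun l => (k, l) ∈ E), ∑ j, A k l i j * (t * μ l j))
          = t * ∑ l ∈ Finset.univ.filter (fun l => (k, l) ∈ E), ∑ j, A k l i j * μ l j := by
        intro i
        rw [Finset.mul_sum]
        refine Finset.sum_congr rfl fun l _ => ?_
        rw [Finset.mul_sum]
        exact Finset.sum_congr rfl fun j _ => by ring
      simp only [hpull]
      unfold polyPayoff polyReward
      rw [Finset.mul_sum]
      exact Finset.sum_congr rfl fun i _ => by ring
    have hmem : (t * polyPayoff E A k μ - ∫ s in (0:ℝ)..t, polyPayoff E A k (x s))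
        ∈ ((fun xk' => ∫ s in (0:ℝ)..t,
          (polyPayoff E A k (Function.update (x s) k xk') - polyPayoff E A k (x s))) ''
          stdSimplex ℝ (Fin (n k))) := by
      refine ⟨μ k, hμΔ k, ?_⟩
      show (∫ s in (0:ℝ)..t, (polyPayoff E A k (Function.update (x s) k (μ k))
        - polyPayoff E A k (x s))) = _
      rw [intervalIntegral.integral_sub hgInt (hIntPay k), hval]
    exact le_csSup hbdd hmem
  -- sum over players
  have hsum : t * SW E A μ - (∫ s in (0:ℝ)..t, SW E A (x s)) ≤ ∑ k, regret E A x k t := by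
    have hI : (∫ s in (0:ℝ)..t, SW E A (x s))
        = ∑ k, ∫ s in (0:ℝ)..t, polyPayoff E A k (x s) := by
      unfold SW
      exact intervalIntegral.integral_finset_sum (fun k _ => hIntPay k)
    rw [hI]
    unfold SW
    rw [Finset.mul_sum, ← Finset.sum_sub_distrib]
    exact Finset.sum_le_sum fun k _ => hkey k
  have hc : (1 / t) * t = 1 := by field_simp
  have hpos : (0:ℝ) < 1 / t := by positivity
  have hmul := mul_le_mul_of_nonneg_left hsum hpos.le
  have he : (1 / t) * (t * SW E A μ - ∫ s in (0:ℝ)..t, SW E A (x s))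
      = SW E A μ - (1 / t) * ∫ s in (0:ℝ)..t, SW E A (x s) := by
    field_simp
  have h2 : SW E A μ - (1 / t) * (∫ s in (0:ℝ)..t, SW E A (x s))
      ≤ (1 / t) * ∑ k, regret E A x k t := by rw [← he]; exact hmul
  exact ⟨h2, by linarith [h2]⟩
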